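/- Let p ≥ 1 and suppose p_i = p for all 3 ≤ i ≤ k. Then for all integers j ≥ 0 and n ≥ 1 with binom(k+j−3, k−2) < n ≤ binom(k+j−2, k−2), the generalized Frame-Stewart number with unit q-weights satisfies G^1_k(n) = Σ_{m=0}^{j−1} binom(k+m−3, k−3)·p^m + (n − binom(k+j−3, k−2))·p^j. -/

import Mathlib

open Finset

def cFS (k J : ℕ) : ℕ := (k + J - 2).choose (k - 2)

def LFS (k : ℕ) : ℕ → ℕ
  | 0 => 0
  | (j+1) => cFS k j

noncomputable def idxFS (k i : ℕ) : ℕ := sInf {J | i ≤ cFS k J}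

noncomputable def HFS (p k n : ℕ) : ℕ := ∑ i ∈ Finset.range n, p ^ (idxFS k (i+1))

lemma cFS_mono (k : ℕ) {a b : ℕ} (h : a ≤ b) : cFS k a ≤ cFS k b :=
  Nat.choose_mono _ (by omega)

lemma cFS_succ_le (k : ℕ) (hk : 3 ≤ k) (i : ℕ) : i + 1 ≤ cFS k i := by
  obtain ⟨m, rfl⟩ : ∃ m, k = m + 3 := ⟨k - 3, by omega⟩
  have h1 : m + 3 + i - 2 = m + 1 + i := by omega
  have h2 : m + 3 - 2 = m + 1 := by omega
  unfold cFS
  rw [h1, h2]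
  have hs : (m + 1 + i).choose (m + 1 + i - (m + 1)) = (m + 1 + i).choose (m + 1) :=
    Nat.choose_symm (by omega)
  have h3 : m + 1 + i - (m + 1) = i := by omega
  rw [h3] at hs
  rw [← hs]
  calc i + 1 = (i + 1).choose i := (Nat.choose_succ_self_right i).symm
    _ ≤ (m + 1 + i).choose i := Nat.choose_mono _ (by omega)

lemma idxFS_le_iff (k : ℕ) (hk : 3 ≤ k) (i J : ℕ) (hi : 1 ≤ i) :
    idxFS k i ≤ J ↔ i ≤ cFS k J := by
  have hne : {J | i ≤ cFS k J}.Nonempty := ⟨i, by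
    simp only [Set.mem_setOf_eq]
    have := cFS_succ_le k hk i; omega⟩
  constructor
  · intro h
    have hmem : i ≤ cFS k (idxFS k i) := Nat.sInf_mem hne
    exact hmem.trans (cFS_mono k h)
  · intro h
    exact Nat.sInf_le h

lemma idxFS_spec (k : ℕ) (hk : 3 ≤ k) (i : ℕ) (hi : 1 ≤ i) :
    i ≤ cFS k (idxFS k i) :=
  (idxFS_le_iff k hk i _ hi).1 le_rfl

lemma idxFS_le_self (k : ℕ) (hk : 3 ≤ k) (i : ℕ) : idxFS k (i + 1) ≤ i :=
  (idxFS_le_iff k hk (i+1) i (by omega)).2 (cFS_succ_le k hk i)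

lemma idxFS_eq (k : ℕ) (hk : 3 ≤ k) (i j : ℕ) (h1 : LFS k j < i) (h2 : i ≤ LFS k (j+1)) :
    idxFS k i = j := by
  have hi : 1 ≤ i := by
    cases j with
    | zero => exact h1
    | succ j' => omega
  have hle : idxFS k i ≤ j := (idxFS_le_iff k hk i j hi).2 h2
  cases j with
  | zero => omega
  | succ j' =>
    have : ¬ (idxFS k i ≤ j') := by
      rw [idxFS_le_iff k hk i j' hi]
      simpa [LFS] using h1
    omega

lemma cFS_zero (k : ℕ) : cFS k 0 = 1 := by
  unfold cFS
  have : k + 0 - 2 = k - 2 := by omega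
  rw [this, Nat.choose_self]

lemma pascal_cFS (k : ℕ) (hk : 3 ≤ k) (J : ℕ) :
    cFS k (J + 1) = cFS k J + cFS (k - 1) (J + 1) := by
  obtain ⟨m, rfl⟩ : ∃ m, k = m + 3 := ⟨k - 3, by omega⟩
  unfold cFS
  have h1 : m + 3 + (J + 1) - 2 = (m + 1 + J) + 1 := by omega
  have h2 : m + 3 - 2 = m + 1 := by omega
  have h3 : m + 3 + J - 2 = m + 1 + J := by omega
  have h4 : m + 3 - 1 + (J + 1) - 2 = m + 1 + J := by omega
  have h5 : m + 3 - 1 - 2 = m := by omega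
  rw [h1, h2, h3, h4, h5, Nat.choose_succ_succ' (m + 1 + J) m]
  omega

lemma pascal_LFS (k : ℕ) (hk : 3 ≤ k) (j : ℕ) :
    LFS k (j + 1) = LFS k j + cFS (k - 1) j := by
  cases j with
  | zero =>
    simp [LFS, cFS_zero]
  | succ j' =>
    show cFS k (j' + 1) = cFS k j' + cFS (k-1) (j'+1)
    exact pascal_cFS k hk j'

lemma LFS_mono (k : ℕ) (hk : 3 ≤ k) {a b : ℕ} (h : a ≤ b) : LFS k a ≤ LFS k b := by
  induction b with
  | zero =>
    have : a = 0 := by omega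
    subst this; exact le_rfl
  | succ b' ih =>
    rcases Nat.lt_or_ge a (b' + 1) with h' | h'
    · have h5 := ih (by omega)
      have h6 := pascal_LFS k hk b'
      omega
    · have : a = b' + 1 := by omega
      subst this; exact le_rfl

lemma geom_tel (p : ℕ) (hp : 1 ≤ p) (m : ℕ) :
    ∑ J ∈ range m, (p ^ (J + 1) - p ^ J) = p ^ m - 1 := by
  induction m with
  | zero => simp
  | succ m' ih =>
    rw [Finset.sum_range_succ, ih]
    have h1 : p ^ m' ≤ p ^ (m' + 1) := Nat.pow_le_pow_right hp (by omega)
    have h2 : 1 ≤ p ^ m' := Nat.one_le_pow _ _ hp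
    omega

lemma pow_expand (p : ℕ) (hp : 1 ≤ p) (m B : ℕ) (hm : m < B) :
    p ^ m = 1 + ∑ J ∈ range B, (p ^ (J + 1) - p ^ J) * (if J < m then 1 else 0) := by
  have h0 : ∑ J ∈ range B, (p ^ (J + 1) - p ^ J) * (if J < m then 1 else 0)
      = ∑ J ∈ range m, (p ^ (J + 1) - p ^ J) := by
    calc ∑ J ∈ range B, (p ^ (J + 1) - p ^ J) * (if J < m then 1 else 0)
        = ∑ J ∈ range B, (if J < m then p ^ (J + 1) - p ^ J else 0) := by
          apply Finset.sum_congr rfl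
          intro J _
          split <;> simp
      _ = ∑ J ∈ (range B).filter (fun J => J < m), (p ^ (J + 1) - p ^ J) :=
          (Finset.sum_filter _ _).symm
      _ = ∑ J ∈ range m, (p ^ (J + 1) - p ^ J) := by
          apply Finset.sum_congr _ (fun _ _ => rfl)
          ext x
          simp only [Finset.mem_filter, Finset.mem_range]
          omega
  rw [h0, geom_tel p hp]
  have : 1 ≤ p ^ m := Nat.one_le_pow _ _ hp
  omega

lemma sum_pow_eq (p : ℕ) (hp : 1 ≤ p) (e : ℕ → ℕ) (n B : ℕ)
    (hB : ∀ i < n, e i < B) :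
    ∑ i ∈ range n, p ^ e i
      = n + ∑ J ∈ range B, (p ^ (J + 1) - p ^ J) *
          (n - ((range n).filter (fun i => e i ≤ J)).card) := by
  have h1 : ∀ i ∈ range n, p ^ e i
      = 1 + ∑ J ∈ range B, (p ^ (J + 1) - p ^ J) * (if J < e i then 1 else 0) :=
    fun i hi => pow_expand p hp (e i) B (hB i (Finset.mem_range.mp hi))
  rw [Finset.sum_congr rfl h1, Finset.sum_add_distrib, Finset.sum_const, smul_eq_mul,
    mul_one, Finset.card_range]
  congr 1
  rw [Finset.sum_comm]
  apply Finset.sum_congr rfl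
  intro J _
  rw [← Finset.mul_sum]
  congr 1
  have hc : ((range n).filter (fun i => e i ≤ J)).card
      + ((range n).filter (fun i => ¬ e i ≤ J)).card = n := by
    rw [Finset.card_filter_add_card_filter_not, Finset.card_range]
  have hsum : ∑ i ∈ range n, (if J < e i then (1:ℕ) else 0)
      = ((range n).filter (fun i => ¬ e i ≤ J)).card := by
    rw [Finset.card_filter]
    simp only [Nat.not_le]
  rw [hsum]
  omega

lemma count_idx (k : ℕ) (hk : 3 ≤ k) (n J : ℕ) :
    ((range n).filter (fun i => idxFS k (i+1) ≤ J)).card = min n (cFS k J) := by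
  have : (range n).filter (fun i => idxFS k (i+1) ≤ J) = range (min n (cFS k J)) := by
    ext i
    simp only [Finset.mem_filter, Finset.mem_range]
    rw [idxFS_le_iff k hk (i+1) J (by omega)]
    omega
  rw [this, Finset.card_range]

lemma count_idx_succ (k : ℕ) (hk : 3 ≤ k) (n J : ℕ) :
    ((range n).filter (fun i => idxFS k (i+1) + 1 ≤ J)).card
      = if J = 0 then 0 else min n (cFS k (J - 1)) := by
  cases J with
  | zero => simp
  | succ J' =>
    rw [if_neg (Nat.succ_ne_zero J')]
    show _ = min n (cFS k (J' + 1 - 1))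
    rw [Nat.add_sub_cancel, ← count_idx k hk n J']
    congr 1
    ext i
    simp only [Finset.mem_filter, Finset.mem_range]
    omega

lemma HFS_zero (p k : ℕ) : HFS p k 0 = 0 := by simp [HFS]

lemma HFS_one (p k : ℕ) (hk : 3 ≤ k) : HFS p k 1 = 1 := by
  have h0 : idxFS k 1 = 0 := by
    have := idxFS_le_self k hk 0
    simpa using this
  simp [HFS, h0]

lemma mul_HFS (p k m : ℕ) :
    p * HFS p k m = ∑ i ∈ range m, p ^ (idxFS k (i+1) + 1) := by
  rw [HFS, Finset.mul_sum]
  apply Finset.sum_congr rfl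
  intro i _
  rw [pow_succ]
  ring

lemma HFS_expand (p : ℕ) (hp : 1 ≤ p) (k : ℕ) (hk : 3 ≤ k) (n B : ℕ) (hnB : n ≤ B) :
    HFS p k n = n + ∑ J ∈ range B, (p ^ (J + 1) - p ^ J) * (n - min n (cFS k J)) := by
  rw [HFS, sum_pow_eq p hp _ n B
    (fun i hi => lt_of_le_of_lt (idxFS_le_self k hk i) (lt_of_lt_of_le hi hnB))]
  congr 1
  apply Finset.sum_congr rfl
  intro J _
  rw [count_idx k hk n J]

lemma mul_HFS_expand (p : ℕ) (hp : 1 ≤ p) (k : ℕ) (hk : 3 ≤ k) (m B : ℕ) (hmB : m < B) :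
    p * HFS p k m = m + ∑ J ∈ range B, (p ^ (J + 1) - p ^ J) *
      (m - (if J = 0 then 0 else min m (cFS k (J - 1)))) := by
  rw [mul_HFS, sum_pow_eq p hp _ m B
    (fun i hi => by have := idxFS_le_self k hk i; omega)]
  congr 1
  apply Finset.sum_congr rfl
  intro J _
  rw [count_idx_succ k hk m J]

lemma HFS_le (p : ℕ) (hp : 1 ≤ p) (k : ℕ) (hk : 4 ≤ k) (t n : ℕ)
    (ht1 : 1 ≤ t) (ht2 : t ≤ n) :
    HFS p k n ≤ p * HFS p k (n - t) + HFS p (k-1) t := by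
  have h3 : 3 ≤ k := by omega
  have h3' : 3 ≤ k - 1 := by omega
  rw [HFS_expand p hp k h3 n n le_rfl,
      mul_HFS_expand p hp k h3 (n-t) n (by omega),
      HFS_expand p hp (k-1) h3' t n ht2]
  have key : ∀ J ∈ range n,
      (p ^ (J + 1) - p ^ J) * (n - min n (cFS k J))
        ≤ (p ^ (J + 1) - p ^ J) * ((n - t) - (if J = 0 then 0 else min (n - t) (cFS k (J - 1))))
          + (p ^ (J + 1) - p ^ J) * (t - min t (cFS (k-1) J)) := by
    intro J _
    rw [← Nat.mul_add]
    apply Nat.mul_le_mul_left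
    cases J with
    | zero =>
      rw [if_pos rfl]
      have hz1 := cFS_zero k
      have hz2 := cFS_zero (k-1)
      omega
    | succ J' =>
      rw [if_neg (Nat.succ_ne_zero J'), Nat.add_sub_cancel]
      have hpas : cFS k (J' + 1) = cFS k J' + cFS (k-1) (J' + 1) := pascal_cFS k h3 J'
      omega
  have hsum := Finset.sum_le_sum key
  rw [Finset.sum_add_distrib] at hsum
  omega

lemma HFS_eq (p : ℕ) (hp : 1 ≤ p) (k : ℕ) (hk : 4 ≤ k) (n : ℕ) (hn : 1 ≤ n) :
    ∃ t, 1 ≤ t ∧ t ≤ n ∧ HFS p k n = p * HFS p k (n - t) + HFS p (k-1) t := by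
  have h3 : 3 ≤ k := by omega
  have h3' : 3 ≤ k - 1 := by omega
  cases hj : idxFS k n with
  | zero =>
    have hsp := idxFS_spec k h3 n hn
    rw [hj, cFS_zero] at hsp
    have hn1 : n = 1 := by omega
    subst hn1
    exact ⟨1, le_rfl, le_rfl, by
      simp [HFS_one p k h3, HFS_one p (k-1) h3', HFS_zero]⟩
  | succ j' =>
    have hnL : cFS k j' < n := by
      by_contra hcon
      have : idxFS k n ≤ j' := (idxFS_le_iff k h3 n j' hn).2 (by omega)
      omega
    have hnc : n ≤ cFS k (j' + 1) := by
      have := idxFS_spec k h3 n hn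
      rwa [hj] at this
    have hpas1 : LFS k (j' + 1) = LFS k j' + cFS (k-1) j' := pascal_LFS k h3 j'
    have hLL : LFS k (j' + 1) = cFS k j' := rfl
    have hpas2 : cFS k (j' + 1) = cFS k j' + cFS (k-1) (j' + 1) := pascal_cFS k h3 j'
    obtain ⟨t, htdef⟩ : ∃ t, t = min (n - LFS k j') (cFS (k-1) (j' + 1)) := ⟨_, rfl⟩
    have ht1 : 1 ≤ t := by omega
    have ht2 : t ≤ n := by omega
    have htub : t ≤ cFS (k-1) (j' + 1) := by omega
    have htlb : cFS (k-1) j' ≤ t := by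
      have := cFS_mono (k-1) (show j' ≤ j' + 1 by omega)
      omega
    have ht1b : LFS k j' ≤ n - t := by omega
    have ht1ub : n - t ≤ cFS k j' := by omega
    refine ⟨t, ht1, ht2, ?_⟩
    have claim : ∀ J ∈ range n,
        (p ^ (J + 1) - p ^ J) * (n - min n (cFS k J))
          = (p ^ (J + 1) - p ^ J) * ((n - t) - (if J = 0 then 0 else min (n - t) (cFS k (J - 1))))
            + (p ^ (J + 1) - p ^ J) * (t - min t (cFS (k-1) J)) := by
      intro J _
      rw [← Nat.mul_add]
      congr 1
      cases J with
      | zero =>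
        rw [if_pos rfl]
        have hz1 := cFS_zero k
        have hz2 := cFS_zero (k-1)
        omega
      | succ m =>
        rw [if_neg (Nat.succ_ne_zero m), Nat.add_sub_cancel]
        rcases le_or_gt (m + 1) j' with hc | hc
        · have f1 : cFS k (m + 1) ≤ cFS k j' := cFS_mono k hc
          have f2 : cFS k m ≤ LFS k j' := by
            have h5 : LFS k (m + 1) ≤ LFS k j' := LFS_mono k h3 hc
            have h6 : LFS k (m + 1) = cFS k m := rfl
            omega
          have f3 : cFS (k-1) (m + 1) ≤ cFS (k-1) j' := cFS_mono (k-1) hc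
          have f4 : cFS k (m + 1) = cFS k m + cFS (k-1) (m + 1) := pascal_cFS k h3 m
          omega
        · have g1 : cFS k j' ≤ cFS k m := cFS_mono k (by omega)
          have g2 : cFS k (j' + 1) ≤ cFS k (m + 1) := cFS_mono k (by omega)
          have g3 : cFS (k-1) (j' + 1) ≤ cFS (k-1) (m + 1) := cFS_mono (k-1) (by omega)
          omega
    rw [HFS_expand p hp k h3 n n le_rfl,
        mul_HFS_expand p hp k h3 (n - t) n (by omega),
        HFS_expand p hp (k-1) h3' t n ht2,
        Finset.sum_congr rfl claim, Finset.sum_add_distrib]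
    omega

lemma G_eq_H (p : ℕ) (hp : 1 ≤ p) (G1 : ℕ → ℕ → ℕ)
    (hG10 : ∀ k', G1 k' 0 = 0)
    (hG13 : ∀ n, 1 ≤ n → G1 3 n = p * G1 3 (n - 1) + 1)
    (hG1k : ∀ k', 4 ≤ k' → ∀ n, 1 ≤ n →
      G1 k' n = sInf {v | ∃ t, 1 ≤ t ∧ t ≤ n ∧ v = p * G1 k' (n - t) + G1 (k' - 1) t}) :
    ∀ k, 3 ≤ k → ∀ n, G1 k n = HFS p k n := by
  intro k hk
  induction k, hk using Nat.le_induction with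
  | base =>
    have hidx3 : ∀ i : ℕ, idxFS 3 (i+1) = i := by
      intro i
      have hc3 : ∀ m : ℕ, cFS 3 m = m + 1 := by
        intro m
        unfold cFS
        rw [(by omega : 3 + m - 2 = m + 1), (by omega : (3:ℕ) - 2 = 1), Nat.choose_one_right]
      apply idxFS_eq 3 le_rfl (i+1) i
      · cases i with
        | zero => simp [LFS]
        | succ m =>
          show cFS 3 m < m + 1 + 1
          rw [hc3 m]
          omega
      · show i + 1 ≤ cFS 3 i
        rw [hc3 i]
    have hH : ∀ m, HFS p 3 m = ∑ i ∈ range m, p ^ i := by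
      intro m
      unfold HFS
      exact Finset.sum_congr rfl (fun i _ => by rw [hidx3 i])
    intro n
    induction n with
    | zero => rw [hG10, HFS_zero]
    | succ n' ihn =>
      rw [hG13 (n'+1) (by omega), Nat.add_sub_cancel, ihn, hH, hH,
        Finset.sum_range_succ', Finset.mul_sum]
      simp [pow_succ, mul_comm]
  | succ k' hk' ihk =>
    intro n
    induction n using Nat.strong_induction_on with
    | _ n ihn =>
      rcases Nat.eq_zero_or_pos n with hn0 | hn
      · subst hn0
        rw [hG10, HFS_zero]
      · rw [hG1k (k'+1) (by omega) n hn]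
        have hmem : HFS p (k'+1) n ∈
            {v | ∃ t, 1 ≤ t ∧ t ≤ n ∧ v = p * G1 (k'+1) (n - t) + G1 (k'+1-1) t} := by
          obtain ⟨t, ht1, ht2, heq⟩ := HFS_eq p hp (k'+1) (by omega) n hn
          refine ⟨t, ht1, ht2, ?_⟩
          rw [ihn (n - t) (by omega)]
          simp only [Nat.add_sub_cancel]
          rw [ihk t]
          simpa [Nat.add_sub_cancel] using heq
        apply le_antisymm (Nat.sInf_le hmem)
        apply le_csInf ⟨_, hmem⟩
        rintro v ⟨t, ht1, ht2, rfl⟩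
        rw [ihn (n - t) (by omega)]
        simp only [Nat.add_sub_cancel]
        rw [ihk t]
        exact HFS_le p hp (k'+1) (by omega) t n ht1 ht2

lemma HFS_block (p : ℕ) (hp : 1 ≤ p) (k : ℕ) (hk : 3 ≤ k) (j n : ℕ)
    (h1 : LFS k j ≤ n) (h2 : n ≤ LFS k (j+1)) :
    HFS p k n = HFS p k (LFS k j) + (n - LFS k j) * p ^ j := by
  have hidx : ∀ i ∈ Finset.Ico (LFS k j) n, p ^ idxFS k (i+1) = p ^ j := by
    intro i hi
    rw [Finset.mem_Ico] at hi
    rw [idxFS_eq k hk (i+1) j (by omega) (by omega)]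
  have e1 : ∑ i ∈ Finset.Ico 0 (LFS k j), p ^ idxFS k (i+1) = HFS p k (LFS k j) := by
    rw [HFS, Finset.range_eq_Ico]
  have e2 : ∑ i ∈ Finset.Ico (LFS k j) n, p ^ idxFS k (i+1) = (n - LFS k j) * p ^ j := by
    rw [Finset.sum_congr rfl hidx, Finset.sum_const, Nat.card_Ico, smul_eq_mul]
  rw [HFS, Finset.range_eq_Ico,
    ← Finset.sum_Ico_consecutive _ (Nat.zero_le (LFS k j)) h1, e1, e2]

lemma HFS_L (p : ℕ) (hp : 1 ≤ p) (k : ℕ) (hk : 3 ≤ k) (j : ℕ) :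
    HFS p k (LFS k j) = ∑ m ∈ range j, cFS (k-1) m * p ^ m := by
  induction j with
  | zero => simp [LFS, HFS]
  | succ j' ih =>
    have hb := HFS_block p hp k hk j' (LFS k (j'+1))
      (LFS_mono k hk (Nat.le_succ j')) le_rfl
    have hd : LFS k (j'+1) - LFS k j' = cFS (k-1) j' := by
      have := pascal_LFS k hk j'
      omega
    rw [hb, ih, Finset.sum_range_succ, hd]

theorem generalized_frame_stewart_constant_p_formula
    (p : ℕ) (hp : 1 ≤ p) (k : ℕ) (hk : 3 ≤ k)
    (G1 : ℕ → ℕ → ℕ)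
    (hG10 : ∀ k', G1 k' 0 = 0)
    (hG13 : ∀ n, 1 ≤ n → G1 3 n = p * G1 3 (n - 1) + 1)
    (hG1k : ∀ k', 4 ≤ k' → ∀ n, 1 ≤ n →
      G1 k' n = sInf {v | ∃ t, 1 ≤ t ∧ t ≤ n ∧ v = p * G1 k' (n - t) + G1 (k' - 1) t})
    (j n : ℕ) (hn : 1 ≤ n)
    (h1 : (k + j - 3).choose (k - 2) < n) (h2 : n ≤ (k + j - 2).choose (k - 2)) :
    G1 k n = (∑ m ∈ Finset.range j, (k + m - 3).choose (k - 3) * p ^ m)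
      + (n - (k + j - 3).choose (k - 2)) * p ^ j := by
  have hL : (k + j - 3).choose (k - 2) = LFS k j := by
    cases j with
    | zero =>
      simp only [LFS]
      exact Nat.choose_eq_zero_of_lt (by omega)
    | succ j' =>
      show _ = cFS k j'
      unfold cFS
      have h9 : k + (j' + 1) - 3 = k + j' - 2 := by omega
      rw [h9]
  have hc : n ≤ LFS k (j + 1) := by
    show n ≤ cFS k j
    unfold cFS; exact h2
  rw [G_eq_H p hp G1 hG10 hG13 hG1k k hk n,
    HFS_block p hp k hk j n (by omega) hc, HFS_L p hp k hk j, hL]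
  congr 1
  apply Finset.sum_congr rfl
  intro m _
  have : cFS (k-1) m = (k + m - 3).choose (k - 3) := by
    unfold cFS
    congr 1 <;> omega
  rw [this]
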